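/- arXiv:2201.06650 — 5 statements merged into one kernel-verified Lean document; each statement's English description precedes it below -/
import Mathlib

section
/- (Rota's Galois Connection Theorem, functional form) Let P be a finite poset, Q any poset, and f : P ⇄ Q : g a Galois connection. Then for any function m : P → ℤ, the Möbius inversion of the pullback g♯m = m ∘ g : Q → ℤ exists and equals the pushforward f♯(∂m), i.e., ∂_Q(m ∘ g)(q) = Σ_{p ∈ f⁻¹(q)} ∂_P m(p) for all q ∈ Q. -/
open Finset

/-- Rota's Galois connection theorem, functional form: if `f : P ⇄ Q : g` is a Galois
connection with `P` finite, and `∂m` is the Möbius inversion of `m : P → ℤ`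
(i.e. `m b = Σ_{a ≤ b} ∂m a`), then the pushforward `f♯ ∂m` is a Möbius inversion of
the pullback `m ∘ g`, i.e. `(m ∘ g) q = Σ_{a ≤ q} (f♯ ∂m) a = Σ_{p : f p ≤ q} ∂m p`. -/
theorem stmt_6 {P Q : Type*} [PartialOrder P] [Fintype P]
    [DecidableRel ((· ≤ ·) : P → P → Prop)]
    [PartialOrder Q] [DecidableRel ((· ≤ ·) : Q → Q → Prop)]
    (f : P → Q) (g : Q → P) (hfg : GaloisConnection f g)
    (m : P → ℤ) (dm : P → ℤ)
    (hdm : ∀ b : P, m b = ∑ a ∈ univ.filter (fun a => a ≤ b), dm a) :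
    ∀ q : Q, m (g q) = ∑ p ∈ univ.filter (fun p => f p ≤ q), dm p := by
  intro q
  rw [hdm (g q)]
  apply Finset.sum_congr _ (fun _ _ => rfl)
  ext p
  simp [hfg p q]
end

section
/- Let m : P → ℤ be S-constructible via a Galois insertion α : S ⇄ P : β with m = m' ∘ β, where S is a finite poset. Then the Möbius inversion ∂_P m exists and is given by ∂_P m = α♯(∂_S m'), i.e., m(b) = Σ_{a ≤ b} (α♯ ∂_S m')(a) for all b ∈ P. -/
open Finset

/-- Möbius inversion of a constructible function: if `m = m' ∘ β` for a Galois
insertion `α : S ⇄ P : β` (with `β ∘ α = id_S`) from a finite poset `S`, and `∂m'`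
is the Möbius inversion of `m'`, then the pushforward `α♯ ∂m'` is a Möbius inversion
of `m`, i.e. `m b = Σ_{a ≤ b} (α♯ ∂m')(a) = Σ_{s : α s ≤ b} ∂m' s` for all `b`. -/
theorem stmt_7 {S P : Type*} [PartialOrder S] [Fintype S]
    [DecidableRel ((· ≤ ·) : S → S → Prop)]
    [PartialOrder P] [DecidableRel ((· ≤ ·) : P → P → Prop)]
    (α : S → P) (β : P → S) (hαβ : GaloisConnection α β) (hins : ∀ s, β (α s) = s)
    (m : P → ℤ) (m' : S → ℤ) (hm : m = m' ∘ β) (dm' : S → ℤ)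
    (hdm' : ∀ s : S, m' s = ∑ t ∈ univ.filter (fun t => t ≤ s), dm' t) :
    ∀ b : P, m b = ∑ s ∈ univ.filter (fun s => α s ≤ b), dm' s := by
  intro b
  have : (univ.filter (fun s => α s ≤ b)) = univ.filter (fun t => t ≤ β b) := by
    apply Finset.filter_congr
    intro s _
    simp [hαβ s b]
  rw [this, hm]
  exact hdm' (β b)
end

section
/- Rota's classical Galois connection theorem: if f : P ⇄ Q : g is a Galois connection between finite posets, then for any p ∈ P and q ∈ Q, Σ_{v ∈ Q, g(v) = p} μ_Q(v, q) = Σ_{u ∈ P, f(u) = q} μ_P(p, u), where μ_P and μ_Q are the Möbius functions of P and Q. -/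
open Finset

/-- Column-sum version of the Möbius defining property, via `ζμ = 1 ↔ μζ = 1`. -/
lemma mu_col {P : Type*} [PartialOrder P] [Fintype P] [DecidableEq P]
    [DecidableRel ((· ≤ ·) : P → P → Prop)]
    (μ : P → P → ℤ)
    (h0 : ∀ a b : P, ¬ a ≤ b → μ a b = 0)
    (h : ∀ a b : P, a ≤ b →
      ∑ c ∈ univ.filter (fun c => a ≤ c ∧ c ≤ b), μ a c = if a = b then 1 else 0)
    (a b : P) :
    ∑ c ∈ univ.filter (fun c => a ≤ c ∧ c ≤ b), μ c b = if a = b then 1 else 0 := by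
  set Z : Matrix P P ℤ := Matrix.of fun x y => if x ≤ y then (1:ℤ) else 0 with hZ
  have hMZ : (Matrix.of μ) * Z = 1 := by
    ext x y
    simp only [Matrix.mul_apply, Matrix.of_apply, hZ, mul_ite, mul_one, mul_zero,
      Matrix.one_apply]
    rw [← Finset.sum_filter]
    have hsub : ∑ c ∈ univ.filter (fun c => c ≤ y), μ x c
        = ∑ c ∈ univ.filter (fun c => x ≤ c ∧ c ≤ y), μ x c := by
      refine (Finset.sum_subset ?_ ?_).symm
      · intro c hc; simp only [mem_filter, mem_univ, true_and] at hc ⊢; exact hc.2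
      · intro c hc hnc; simp only [mem_filter, mem_univ, true_and] at hc hnc
        exact h0 x c (fun hxc => hnc ⟨hxc, hc⟩)
    rw [hsub]
    by_cases hxy : x ≤ y
    · exact h x y hxy
    · rw [if_neg (fun hh => hxy hh.le)]
      refine Finset.sum_eq_zero ?_
      intro c hc; simp only [mem_filter, mem_univ, true_and] at hc
      exact absurd (hc.1.trans hc.2) hxy
  have hZM : Z * (Matrix.of μ) = 1 := mul_eq_one_comm.mp hMZ
  have h2 := congrArg (fun M : Matrix P P ℤ => M a b) hZM
  simp only [Matrix.mul_apply, Matrix.of_apply, hZ, ite_mul, one_mul, zero_mul,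
    Matrix.one_apply] at h2
  rw [← Finset.sum_filter] at h2
  rw [← h2]
  refine Finset.sum_subset ?_ ?_
  · intro c hc; simp only [mem_filter, mem_univ, true_and] at hc ⊢; exact hc.1
  · intro c hc hnc; simp only [mem_filter, mem_univ, true_and] at hc hnc
    exact h0 c b (fun hcb => hnc ⟨hc, hcb⟩)

/-- Rota's classical Galois connection theorem: for a Galois connection
`f : P ⇄ Q : g` between finite posets and Möbius functions `μP`, `μQ`
(characterized by `μ(a,b) = 0` unless `a ≤ b` and `Σ_{a ≤ c ≤ b} μ(a,c) = δ_{ab}`),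
we have `Σ_{v : g v = p} μQ v q = Σ_{u : f u = q} μP p u`. -/
theorem stmt_8 {P Q : Type*} [PartialOrder P] [PartialOrder Q]
    [Fintype P] [Fintype Q] [DecidableEq P] [DecidableEq Q]
    [DecidableRel ((· ≤ ·) : P → P → Prop)] [DecidableRel ((· ≤ ·) : Q → Q → Prop)]
    (f : P → Q) (g : Q → P) (hfg : GaloisConnection f g)
    (μP : P → P → ℤ) (μQ : Q → Q → ℤ)
    (hμP0 : ∀ a b : P, ¬ a ≤ b → μP a b = 0)
    (hμP : ∀ a b : P, a ≤ b →
      ∑ c ∈ univ.filter (fun c => a ≤ c ∧ c ≤ b), μP a c = if a = b then 1 else 0)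
    (hμQ0 : ∀ a b : Q, ¬ a ≤ b → μQ a b = 0)
    (hμQ : ∀ a b : Q, a ≤ b →
      ∑ c ∈ univ.filter (fun c => a ≤ c ∧ c ≤ b), μQ a c = if a = b then 1 else 0)
    (p : P) (q : Q) :
    ∑ v ∈ univ.filter (fun v => g v = p), μQ v q
      = ∑ u ∈ univ.filter (fun u => f u = q), μP p u := by
  -- inner sum over u, for fixed v
  have hinnerP : ∀ v : Q, ∑ u : P, (if u ≤ g v then μP p u else 0)
      = if g v = p then 1 else 0 := by
    intro v
    rw [← Finset.sum_filter]
    have hsub : ∑ u ∈ univ.filter (fun u => u ≤ g v), μP p u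
        = ∑ u ∈ univ.filter (fun u => p ≤ u ∧ u ≤ g v), μP p u := by
      refine (Finset.sum_subset ?_ ?_).symm
      · intro c hc; simp only [mem_filter, mem_univ, true_and] at hc ⊢; exact hc.2
      · intro c hc hnc; simp only [mem_filter, mem_univ, true_and] at hc hnc
        exact hμP0 p c (fun h => hnc ⟨h, hc⟩)
    rw [hsub]
    by_cases hp : p ≤ g v
    · rw [hμP p (g v) hp]
      by_cases he : g v = p
      · simp [he]
      · rw [if_neg (fun h => he h.symm), if_neg he]
    · rw [if_neg (fun h => hp h.ge)]
      refine Finset.sum_eq_zero ?_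
      intro c hc; simp only [mem_filter, mem_univ, true_and] at hc
      exact absurd (hc.1.trans hc.2) hp
  -- inner sum over v, for fixed u
  have hinnerQ : ∀ u : P, ∑ v : Q, (if f u ≤ v then μQ v q else 0)
      = if f u = q then 1 else 0 := by
    intro u
    rw [← Finset.sum_filter]
    have hsub : ∑ v ∈ univ.filter (fun v => f u ≤ v), μQ v q
        = ∑ v ∈ univ.filter (fun v => f u ≤ v ∧ v ≤ q), μQ v q := by
      refine (Finset.sum_subset ?_ ?_).symm
      · intro c hc; simp only [mem_filter, mem_univ, true_and] at hc ⊢; exact hc.1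
      · intro c hc hnc; simp only [mem_filter, mem_univ, true_and] at hc hnc
        exact hμQ0 c q (fun h => hnc ⟨hc, h⟩)
    rw [hsub]
    exact mu_col μQ hμQ0 hμQ (f u) q
  calc ∑ v ∈ univ.filter (fun v => g v = p), μQ v q
      = ∑ v : Q, (if g v = p then 1 else 0) * μQ v q := by
        rw [Finset.sum_filter]
        exact Finset.sum_congr rfl (fun v _ => by split <;> simp
        )
    _ = ∑ v : Q, (∑ u : P, (if u ≤ g v then μP p u else 0)) * μQ v q := by
        refine Finset.sum_congr rfl (fun v _ => by rw [hinnerP v])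
    _ = ∑ v : Q, ∑ u : P, (if u ≤ g v then μP p u * μQ v q else 0) := by
        refine Finset.sum_congr rfl (fun v _ => ?_)
        rw [Finset.sum_mul]
        exact Finset.sum_congr rfl (fun u _ => by split <;> simp
        )
    _ = ∑ u : P, ∑ v : Q, (if f u ≤ v then μP p u * μQ v q else 0) := by
        rw [Finset.sum_comm]
        refine Finset.sum_congr rfl (fun u _ => Finset.sum_congr rfl (fun v _ => ?_))
        exact if_congr (hfg u v).symm rfl rfl
    _ = ∑ u : P, μP p u * (if f u = q then 1 else 0) := by
        refine Finset.sum_congr rfl (fun u _ => ?_)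
        rw [← hinnerQ u, Finset.mul_sum]
        exact Finset.sum_congr rfl (fun v _ => by split <;> simp)
    _ = ∑ u ∈ univ.filter (fun u => f u = q), μP p u := by
        rw [Finset.sum_filter]
        exact Finset.sum_congr rfl (fun u _ => by split <;> simp)
end

section
/- Let M : P → Vec be a persistence module (functor to finite-dimensional vector spaces) with a free presentation φ : F ⇒ M (F free, φ surjective). Then for any a ≤ b in P, dim ker M(a ≤ b) = dim(F(a) ∩ ker φ_b) − dim(F(a) ∩ ker φ_a), where F(a) is regarded as a subspace of F(b) via the (injective) map F(a ≤ b). -/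
open CategoryTheory
open scoped Classical

/-- The submodule of `k` which is everything if `a ≤ b` and zero otherwise. -/
noncomputable def upSub (k : Type) [Field k] {P : Type} [PartialOrder P] (a b : P) :
    Submodule k k :=
  if a ≤ b then ⊤ else ⊥

lemma upSub_mono (k : Type) [Field k] {P : Type} [PartialOrder P] (a : P) {b c : P}
    (h : b ≤ c) : upSub k a b ≤ upSub k a c := by
  unfold upSub
  split_ifs with h1 h2
  · exact le_rfl
  · exact absurd (h1.trans h) h2
  · exact bot_le
  · exact bot_le

/-- The free persistence module `⨁_{i} k^{↑ pts i}` on a finite family of points: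
it assigns to `b` the direct sum of the modules `k^{↑ pts i}(b)`, with (injective)
componentwise inclusion maps. -/
noncomputable def freeMod (k : Type) [Field k] (P : Type) [PartialOrder P] {n : ℕ}
    (pts : Fin n → P) : P ⥤ ModuleCat k where
  obj b := ModuleCat.of k (∀ i, upSub k (pts i) b)
  map {b c} h := ModuleCat.ofHom
    (LinearMap.pi fun i =>
      (Submodule.inclusion (upSub_mono k (pts i) (leOfHom h))).comp (LinearMap.proj i))
  map_id b := by ext x : 1; rfl
  map_comp f g := by ext x : 1; rfl

/-- For a persistence module `M : P → Vec` with a free presentation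
`φ : F ⇒ M` (`F` a finite direct sum of upset modules, each `φ_b` surjective) and
`a ≤ b` in `P`:
`dim ker M(a ≤ b) = dim(F(a) ∩ ker φ_b) − dim(F(a) ∩ ker φ_a)`, where `F(a)` is
viewed as a subspace of `F(b)` via the injective structure map, so that
`F(a) ∩ ker φ_b = range F(a ≤ b) ⊓ ker φ_b` and `dim(F(a) ∩ ker φ_a) = dim ker φ_a`. -/
theorem stmt_13 {P : Type} [PartialOrder P] (k : Type) [Field k] {n : ℕ}
    (pts : Fin n → P) (M : P ⥤ ModuleCat k) (φ : freeMod k P pts ⟶ M)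
    (hsurj : ∀ b : P, Function.Surjective (φ.app b))
    {a b : P} (h : a ≤ b) :
    (Module.finrank k (LinearMap.ker (M.map (homOfLE h)).hom) : ℤ)
      = (Module.finrank k
          (LinearMap.range ((freeMod k P pts).map (homOfLE h)).hom ⊓
            LinearMap.ker (φ.app b).hom : Submodule k _) : ℤ)
        - Module.finrank k (LinearMap.ker (φ.app a).hom) := by
  set f : ((freeMod k P pts).obj a) →ₗ[k] ((freeMod k P pts).obj b) :=
    ((freeMod k P pts).map (homOfLE h)).hom with hfdef
  set m : (M.obj a) →ₗ[k] (M.obj b) := (M.map (homOfLE h)).hom with hmdef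
  set φa : ((freeMod k P pts).obj a) →ₗ[k] (M.obj a) := (φ.app a).hom with hφa
  set φb : ((freeMod k P pts).obj b) →ₗ[k] (M.obj b) := (φ.app b).hom with hφb
  have hnat : φb.comp f = m.comp φa := by
    have := φ.naturality (homOfLE h)
    exact congrArg ModuleCat.Hom.hom this
  -- finite dimensionality
  haveI hfa : FiniteDimensional k ((freeMod k P pts).obj a) := by
    show FiniteDimensional k (∀ i, upSub k (pts i) a)
    infer_instance
  haveI : FiniteDimensional k (M.obj a) :=
    Module.Finite.of_surjective φa (hsurj a)
  -- injectivity of f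
  have hinj : Function.Injective f := by
    intro x y hxy
    funext i
    have := congrFun hxy i
    exact Submodule.inclusion_injective (upSub_mono k (pts i) h) this
  set K := LinearMap.ker (φb.comp f) with hK
  have hKrange : Submodule.map f K = LinearMap.range f ⊓ LinearMap.ker φb := by
    rw [hK, LinearMap.ker_comp, Submodule.map_comap_eq]
  have hkerle : LinearMap.ker φa ≤ K := by
    intro x hx
    have : φa x = 0 := hx
    simp only [hK, LinearMap.mem_ker, LinearMap.comp_apply]
    rw [show φb (f x) = m (φa x) from DFunLike.congr_fun hnat x, this, map_zero]
  have hKm : Submodule.map φa K = LinearMap.ker m := by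
    have : K = Submodule.comap φa (LinearMap.ker m) := by
      rw [hK, hnat, LinearMap.ker_comp]
    rw [this, Submodule.map_comap_eq, LinearMap.range_eq_top.2 (hsurj a), top_inf_eq]
  -- rank-nullity on φa restricted to K
  have rn := LinearMap.finrank_range_add_finrank_ker (φa.domRestrict K)
  have hr : LinearMap.range (φa.domRestrict K) = LinearMap.ker m := by
    rw [LinearMap.range_domRestrict, hKm]
  have hk : Module.finrank k (LinearMap.ker (φa.domRestrict K))
      = Module.finrank k (LinearMap.ker φa) := by
    rw [LinearMap.ker_domRestrict]
    exact LinearEquiv.finrank_eq (Submodule.comapSubtypeEquivOfLe hkerle)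
  have hKdim : Module.finrank k K
      = Module.finrank k (LinearMap.range f ⊓ LinearMap.ker φb : Submodule k _) := by
    rw [← hKrange]
    exact LinearEquiv.finrank_eq (Submodule.equivMapOfInjective f hinj K)
  rw [hr, hk, hKdim] at rn
  push_cast [← rn]
  ring
end

section
/- Positivity of persistence diagrams over totally ordered sets: let P = {p_0 < p_1 < ⋯ < p_n} be a finite totally ordered set and M : P → Vec a persistence module with free presentation φ : F ⇒ M. Define the birth-death function m_φ : P̄ → ℤ by m_φ(a,b) = dim(F(a) ∩ ker φ_b). Then the Möbius inversion ∂m_φ is nonnegative: ∂m_φ(I) ≥ 0 for all intervals I ∈ P̄. -/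
open CategoryTheory Finset
open scoped Classical

/-- The interval poset `P̄ = {(a,b) ∈ P × P | a ≤ b}` with the product order. -/
def Ibar (P : Type*) [PartialOrder P] := {p : P × P // p.1 ≤ p.2}

instance (P : Type*) [PartialOrder P] : PartialOrder (Ibar P) :=
  Subtype.partialOrder _

instance (P : Type*) [PartialOrder P] [DecidableRel ((· ≤ ·) : P → P → Prop)] :
    DecidableRel ((· ≤ ·) : Ibar P → Ibar P → Prop) :=
  fun a b => inferInstanceAs (Decidable (a.val ≤ b.val))

instance (P : Type*) [PartialOrder P] [Fintype P]
    [DecidableRel ((· ≤ ·) : P → P → Prop)] : Fintype (Ibar P) :=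
  Subtype.fintype _

/-! ### Auxiliary lemmas -/

lemma quad_abs {k : Type} [Field k] {W W' : Type} [AddCommGroup W] [Module k W]
    [AddCommGroup W'] [Module k W'] [FiniteDimensional k W] [FiniteDimensional k W']
    (f : W →ₗ[k] W') (A A' : Submodule k W') (B B' : Submodule k W)
    (hA : A ≤ A') (hB : B ≤ B')
    (hmap : ∀ x ∈ B', f x ∈ A')
    (hker : ∀ x ∈ B', f x ∈ A → x ∈ B) :
    Module.finrank k B' + Module.finrank k A ≤
      Module.finrank k A' + Module.finrank k B := by
  set h : ↥B' →ₗ[k] W' ⧸ A := A.mkQ ∘ₗ f ∘ₗ B'.subtype with hh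
  have hrank := h.finrank_range_add_finrank_ker
  have h1 : Module.finrank k (LinearMap.ker h) ≤ Module.finrank k B := by
    have hker' : LinearMap.ker h ≤ B.comap B'.subtype := by
      intro x hx
      simp only [hh, LinearMap.mem_ker, LinearMap.comp_apply] at hx
      exact hker x.1 x.2 ((Submodule.Quotient.mk_eq_zero A).mp hx)
    calc Module.finrank k (LinearMap.ker h)
        ≤ Module.finrank k (B.comap B'.subtype) := Submodule.finrank_mono hker'
      _ = Module.finrank k B := (Submodule.comapSubtypeEquivOfLe hB).finrank_eq
  have h2 : Module.finrank k (LinearMap.range h) + Module.finrank k A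
      ≤ Module.finrank k A' := by
    set g : ↥A' →ₗ[k] W' ⧸ A := A.mkQ.domRestrict A' with hg
    have hrg := g.finrank_range_add_finrank_ker
    have hrange : LinearMap.range h ≤ LinearMap.range g := by
      rintro _ ⟨x, rfl⟩
      exact ⟨⟨f x.1, hmap x.1 x.2⟩, rfl⟩
    have hkg : LinearMap.ker g = A.comap A'.subtype := by
      ext x
      simp [hg, Submodule.Quotient.mk_eq_zero]
    have hkA : Module.finrank k (LinearMap.ker g) = Module.finrank k A := by
      rw [hkg]
      exact (Submodule.comapSubtypeEquivOfLe hA).finrank_eq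
    calc Module.finrank k (LinearMap.range h) + Module.finrank k A
        ≤ Module.finrank k (LinearMap.range g) + Module.finrank k (LinearMap.ker g) := by
          rw [hkA]; exact Nat.add_le_add_right (Submodule.finrank_mono hrange) _
      _ = Module.finrank k A' := hrg
  omega

section FreeModFacts

variable (k : Type) [Field k] {P : Type} [PartialOrder P] {n : ℕ} (pts : Fin n → P)

instance freeMod_findim (b : P) : FiniteDimensional k ((freeMod k P pts).obj b) :=
  inferInstanceAs (FiniteDimensional k (∀ i, upSub k (pts i) b))

lemma freeMod_map_injective {b c : P} (h : b ≤ c) :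
    Function.Injective ((freeMod k P pts).map (homOfLE h)) := by
  intro x y hxy
  funext i
  have h2 : (((freeMod k P pts).map (homOfLE h)) x i).val
      = (((freeMod k P pts).map (homOfLE h)) y i).val :=
    congrArg Subtype.val (congrFun hxy i)
  exact Subtype.ext h2

lemma freeMod_map_comp {a b c : P} (h1 : a ≤ b) (h2 : b ≤ c) (x) :
    (freeMod k P pts).map (homOfLE (h1.trans h2)) x =
      (freeMod k P pts).map (homOfLE h2) ((freeMod k P pts).map (homOfLE h1) x) := by
  have : (homOfLE (h1.trans h2) : a ⟶ c) = homOfLE h1 ≫ homOfLE h2 := rfl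
  rw [this, (freeMod k P pts).map_comp]
  rfl

lemma freeMod_range_mono {a a' b : P} (h1 : a ≤ a') (h2 : a' ≤ b) :
    LinearMap.range ((freeMod k P pts).map (homOfLE (h1.trans h2))).hom ≤
      LinearMap.range ((freeMod k P pts).map (homOfLE h2)).hom := by
  rintro _ ⟨x, rfl⟩
  exact ⟨(freeMod k P pts).map (homOfLE h1) x, (freeMod_map_comp k pts h1 h2 x).symm⟩

lemma nat_ker (M : P ⥤ ModuleCat k) (φ : freeMod k P pts ⟶ M) {b c : P} (h : b ≤ c)
    (x) (hx : x ∈ LinearMap.ker (φ.app b).hom) :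
    (freeMod k P pts).map (homOfLE h) x ∈ LinearMap.ker (φ.app c).hom := by
  have hnat := φ.naturality (homOfLE h)
  have h2 : (φ.app c) (((freeMod k P pts).map (homOfLE h)) x)
      = (M.map (homOfLE h)) ((φ.app b) x) := LinearMap.congr_fun (congrArg ModuleCat.Hom.hom hnat) x
  simp only [LinearMap.mem_ker] at hx ⊢
  rw [h2, hx, map_zero]

variable (M : P ⥤ ModuleCat k) (φ : freeMod k P pts ⟶ M)

/-- The birth–death function. -/
noncomputable def mval (J : Ibar P) : ℕ :=
  Module.finrank k
    (LinearMap.range ((freeMod k P pts).map (homOfLE J.prop)).hom ⊓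
      LinearMap.ker (φ.app J.val.2).hom : Submodule k _)

lemma mval_mono1 {a a' b : P} (h1 : a ≤ a') (h2 : a' ≤ b) (h : a ≤ b) :
    mval k pts M φ ⟨(a, b), h⟩ ≤ mval k pts M φ ⟨(a', b), h2⟩ := by
  apply Submodule.finrank_mono
  exact inf_le_inf (freeMod_range_mono k pts h1 h2) le_rfl

lemma mval_mono2 {a b b' : P} (hab : a ≤ b) (hbb : b ≤ b') (h' : a ≤ b') :
    mval k pts M φ ⟨(a, b), hab⟩ ≤ mval k pts M φ ⟨(a, b'), h'⟩ := by
  have := quad_abs ((freeMod k P pts).map (homOfLE hbb)).hom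
    (⊥ : Submodule k ((freeMod k P pts).obj b'))
    (LinearMap.range ((freeMod k P pts).map (homOfLE h')).hom ⊓ LinearMap.ker (φ.app b').hom)
    (⊥ : Submodule k ((freeMod k P pts).obj b))
    (LinearMap.range ((freeMod k P pts).map (homOfLE hab)).hom ⊓ LinearMap.ker (φ.app b).hom)
    bot_le bot_le
    (fun x hx => by
      obtain ⟨⟨y, hy⟩, hk⟩ := hx
      refine ⟨⟨y, ?_⟩, nat_ker k pts M φ hbb x hk⟩
      rw [← hy]
      exact (freeMod_map_comp k pts hab hbb y).symm)
    (fun x _ hx => by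
      rw [Submodule.mem_bot] at hx ⊢
      exact freeMod_map_injective k pts hbb (by rw [hx, map_zero]))
  simpa [finrank_bot, mval] using this

lemma mval_quad {a a' b b' : P} (h1 : a ≤ a') (h2 : a' ≤ b) (h3 : b ≤ b')
    (hab : a ≤ b) (hab' : a ≤ b') (ha'b' : a' ≤ b') :
    mval k pts M φ ⟨(a', b), h2⟩ + mval k pts M φ ⟨(a, b'), hab'⟩ ≤
      mval k pts M φ ⟨(a', b'), ha'b'⟩ + mval k pts M φ ⟨(a, b), hab⟩ := by
  exact quad_abs ((freeMod k P pts).map (homOfLE h3)).hom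
    (LinearMap.range ((freeMod k P pts).map (homOfLE hab')).hom ⊓ LinearMap.ker (φ.app b').hom)
    (LinearMap.range ((freeMod k P pts).map (homOfLE ha'b')).hom ⊓ LinearMap.ker (φ.app b').hom)
    (LinearMap.range ((freeMod k P pts).map (homOfLE hab)).hom ⊓ LinearMap.ker (φ.app b).hom)
    (LinearMap.range ((freeMod k P pts).map (homOfLE h2)).hom ⊓ LinearMap.ker (φ.app b).hom)
    (inf_le_inf (freeMod_range_mono k pts h1 ha'b') le_rfl)
    (inf_le_inf (freeMod_range_mono k pts h1 h2) le_rfl)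
    (fun x hx => by
      obtain ⟨⟨y, hy⟩, hk⟩ := hx
      refine ⟨⟨y, ?_⟩, nat_ker k pts M φ h3 x hk⟩
      rw [← hy]
      exact (freeMod_map_comp k pts h2 h3 y).symm)
    (fun x hx hfx => by
      obtain ⟨_, hk⟩ := hx
      obtain ⟨⟨z, hz⟩, _⟩ := hfx
      refine ⟨⟨z, ?_⟩, hk⟩
      apply freeMod_map_injective k pts h3
      rw [← hz]
      exact (freeMod_map_comp k pts hab h3 z).symm)

end FreeModFacts

lemma Ibar_le_mk {P : Type} [PartialOrder P] {c d a b : P} {h1 : c ≤ d} {h2 : a ≤ b} :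
    @LE.le (Ibar P) _ ⟨(c, d), h1⟩ ⟨(a, b), h2⟩ ↔ c ≤ a ∧ d ≤ b :=
  ⟨fun h => h, fun h => h⟩

lemma Ibar_eq_mk {P : Type} [PartialOrder P] {c d a b : P} {h1 : c ≤ d} {h2 : a ≤ b} :
    @Eq (Ibar P) ⟨(c, d), h1⟩ ⟨(a, b), h2⟩ ↔ c = a ∧ d = b :=
  ⟨fun h => by cases h; exact ⟨rfl, rfl⟩, fun ⟨e1, e2⟩ => by subst e1 e2; rfl⟩

lemma exists_pred {P : Type} [LinearOrder P] [Fintype P] {a : P} (h : ∃ c, c < a) :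
    ∃ pa, ∀ c, c ≤ pa ↔ c < a := by
  classical
  obtain ⟨c0, hc0⟩ := h
  have hne : (univ.filter (· < a)).Nonempty := ⟨c0, by simp [hc0]⟩
  refine ⟨(univ.filter (· < a)).max' hne, fun c => ⟨fun hc => lt_of_le_of_lt hc ?_,
    fun hc => (univ.filter (· < a)).le_max' c (by simp [hc])⟩⟩
  have := (univ.filter (· < a)).max'_mem hne
  simpa using this

/-- Positivity of persistence diagrams over finite totally ordered sets: for a
persistence module `M` over a finite linear order `P` with free presentation
`φ : F ⇒ M` (`F` free, each `φ_b` surjective), the Möbius inversion `∂m_φ` of the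
birth–death function `m_φ(a,b) = dim (F(a) ∩ ker φ_b)` (intersection taken inside
`F(b)`) is nonnegative. -/
theorem stmt_15 {P : Type} [LinearOrder P] [Fintype P] (k : Type) [Field k] {n : ℕ}
    (pts : Fin n → P) (M : P ⥤ ModuleCat k) (φ : freeMod k P pts ⟶ M)
    (hsurj : ∀ b : P, Function.Surjective (φ.app b))
    (dm : Ibar P → ℤ)
    (hdm : ∀ I : Ibar P,
      (Module.finrank k
        (LinearMap.range ((freeMod k P pts).map (homOfLE I.prop)).hom ⊓
          LinearMap.ker (φ.app I.val.2).hom : Submodule k _) : ℤ)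
        = ∑ J ∈ univ.filter (fun J => J ≤ I), dm J) :
    ∀ I : Ibar P, 0 ≤ dm I := by
  have hdm' : ∀ J : Ibar P,
      (mval k pts M φ J : ℤ) = ∑ J' ∈ univ.filter (fun J' => J' ≤ J), dm J' :=
    fun J => hdm J
  rintro ⟨⟨a', b'⟩, hab⟩
  replace hab : a' ≤ b' := hab
  by_cases hamin : ∃ c, c < a'
  · -- a' has a predecessor pa
    obtain ⟨pa, hpa⟩ := exists_pred hamin
    have hpalt : pa < a' := (hpa pa).mp le_rfl
    have hsplita : ∀ c, c ≤ a' ↔ (c ≤ pa ∨ c = a') := by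
      intro c
      rw [hpa c, ← le_iff_lt_or_eq]
    rcases eq_or_lt_of_le hab with heq | hlt
    · -- a' = b' : dm I = m(a',b') - m(pa,b')
      subst heq
      set I : Ibar P := ⟨(a', a'), le_rfl⟩ with hI
      set I1 : Ibar P := ⟨(pa, a'), hpalt.le⟩ with hI1
      have hset : univ.filter (fun J => J ≤ I) =
          insert I (univ.filter (fun J => J ≤ I1)) := by
        ext J
        simp only [mem_insert, mem_filter, mem_univ, true_and]
        obtain ⟨⟨c, d⟩, hcd⟩ := J
        rw [hI, hI1]
        rw [Ibar_eq_mk]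
        repeat rw [Ibar_le_mk]
        constructor
        · rintro ⟨hc, hd⟩
          rcases (hsplita c).mp hc with h | rfl
          · exact Or.inr ⟨h, hd⟩
          · exact Or.inl ⟨rfl, le_antisymm hd hcd⟩
        · rintro (⟨rfl, rfl⟩ | ⟨hc, hd⟩)
          · exact ⟨le_rfl, le_rfl⟩
          · exact ⟨hc.trans hpalt.le, hd⟩
      have hnotmem : I ∉ univ.filter (fun J => J ≤ I1) := by
        simp only [mem_filter, mem_univ, true_and]
        rw [hI, hI1]
        rw [Ibar_le_mk]
        intro ⟨h, _⟩
        exact absurd ((hpa a').mp h) (lt_irrefl a')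
      have e0 := hdm' I
      have e1 := hdm' I1
      rw [hset, Finset.sum_insert hnotmem, ← e1] at e0
      have hmono := mval_mono1 k pts M φ hpalt.le le_rfl hpalt.le
      have : (mval k pts M φ I1 : ℤ) ≤ (mval k pts M φ I : ℤ) := by
        exact_mod_cast hmono
      omega
    · -- a' < b' : need pb, quad
      have hbmin : ∃ d, d < b' := ⟨a', hlt⟩
      obtain ⟨pb, hpb⟩ := exists_pred hbmin
      have hpblt : pb < b' := (hpb pb).mp le_rfl
      have hapb : a' ≤ pb := (hpb a').mpr hlt
      have hsplitb : ∀ d, d ≤ b' ↔ (d ≤ pb ∨ d = b') := by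
        intro d
        rw [hpb d, ← le_iff_lt_or_eq]
      set I : Ibar P := ⟨(a', b'), hab⟩ with hI
      set I1 : Ibar P := ⟨(pa, b'), hpalt.le.trans hab⟩ with hI1
      set I2 : Ibar P := ⟨(a', pb), hapb⟩ with hI2
      set I3 : Ibar P := ⟨(pa, pb), hpalt.le.trans hapb⟩ with hI3
      have hset : univ.filter (fun J => J ≤ I) =
          insert I ((univ.filter (fun J => J ≤ I1)) ∪ (univ.filter (fun J => J ≤ I2))) := by
        ext J
        simp only [mem_insert, mem_union, mem_filter, mem_univ, true_and]
        obtain ⟨⟨c, d⟩, hcd⟩ := J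
        rw [hI, hI1, hI2]
        rw [Ibar_eq_mk]
        repeat rw [Ibar_le_mk]
        have h1 := hsplita c
        have h2 := hsplitb d
        constructor
        · rintro ⟨hc, hd⟩
          rcases h1.mp hc with h | rfl
          · exact Or.inr (Or.inl ⟨h, hd⟩)
          · rcases h2.mp hd with h | rfl
            · exact Or.inr (Or.inr ⟨le_rfl, h⟩)
            · exact Or.inl ⟨rfl, rfl⟩
        · rintro (⟨rfl, rfl⟩ | ⟨hc, hd⟩ | ⟨hc, hd⟩)
          · exact ⟨le_rfl, le_rfl⟩
          · exact ⟨hc.trans hpalt.le, hd⟩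
          · exact ⟨hc, hd.trans hpblt.le⟩
      have hnotmem : I ∉ (univ.filter (fun J => J ≤ I1)) ∪ (univ.filter (fun J => J ≤ I2)) := by
        simp only [mem_union, mem_filter, mem_univ, true_and]
        rw [hI, hI1, hI2]
        repeat rw [Ibar_le_mk]
        rintro (⟨h, _⟩ | ⟨_, h⟩)
        · exact absurd ((hpa a').mp h) (lt_irrefl a')
        · exact absurd ((hpb b').mp h) (lt_irrefl b')
      have hinter : (univ.filter (fun J => J ≤ I1)) ∩ (univ.filter (fun J => J ≤ I2)) =
          univ.filter (fun J => J ≤ I3) := by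
        ext J
        simp only [mem_inter, mem_filter, mem_univ, true_and]
        obtain ⟨⟨c, d⟩, hcd⟩ := J
        rw [hI1, hI2, hI3]
        repeat rw [Ibar_le_mk]
        constructor
        · rintro ⟨⟨hc, _⟩, ⟨_, hd⟩⟩
          exact ⟨hc, hd⟩
        · rintro ⟨hc, hd⟩
          exact ⟨⟨hc, hd.trans hpblt.le⟩, ⟨hc.trans hpalt.le, hd⟩⟩
      have e0 := hdm' I
      have e1 := hdm' I1
      have e2 := hdm' I2
      have e3 := hdm' I3
      have hsum := Finset.sum_union_inter (s₁ := univ.filter (fun J => J ≤ I1))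
        (s₂ := univ.filter (fun J => J ≤ I2)) (f := dm)
      rw [hinter] at hsum
      rw [hset, Finset.sum_insert hnotmem] at e0
      have hquad := mval_quad k pts M φ hpalt.le hapb hpblt.le
        (hpalt.le.trans hapb) (hpalt.le.trans hab) hab
      have hquad' : (mval k pts M φ I2 : ℤ) + (mval k pts M φ I1 : ℤ) ≤
          (mval k pts M φ I : ℤ) + (mval k pts M φ I3 : ℤ) := by
        exact_mod_cast hquad
      omega
  · -- a' is minimal
    push_neg at hamin
    have hmin : ∀ c, a' ≤ c := hamin
    by_cases hbmin : ∃ d, d < b'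
    · -- b' has predecessor pb ≥ a'
      obtain ⟨pb, hpb⟩ := exists_pred hbmin
      have hpblt : pb < b' := (hpb pb).mp le_rfl
      have hapb : a' ≤ pb := hmin pb
      have hsplitb : ∀ d, d ≤ b' ↔ (d ≤ pb ∨ d = b') := by
        intro d
        rw [hpb d, ← le_iff_lt_or_eq]
      set I : Ibar P := ⟨(a', b'), hab⟩ with hI
      set I2 : Ibar P := ⟨(a', pb), hapb⟩ with hI2
      have hset : univ.filter (fun J => J ≤ I) =
          insert I (univ.filter (fun J => J ≤ I2)) := by
        ext J
        simp only [mem_insert, mem_filter, mem_univ, true_and]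
        obtain ⟨⟨c, d⟩, hcd⟩ := J
        rw [hI, hI2]
        rw [Ibar_eq_mk]
        repeat rw [Ibar_le_mk]
        constructor
        · rintro ⟨hc, hd⟩
          have hceq : c = a' := le_antisymm hc (hmin c)
          rcases (hsplitb d).mp hd with h | rfl
          · exact Or.inr ⟨hc, h⟩
          · exact Or.inl ⟨hceq, rfl⟩
        · rintro (⟨rfl, rfl⟩ | ⟨hc, hd⟩)
          · exact ⟨le_rfl, le_rfl⟩
          · exact ⟨hc, hd.trans hpblt.le⟩
      have hnotmem : I ∉ univ.filter (fun J => J ≤ I2) := by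
        simp only [mem_filter, mem_univ, true_and]
        rw [hI, hI2]
        rw [Ibar_le_mk]
        rintro ⟨_, h⟩
        exact absurd ((hpb b').mp h) (lt_irrefl b')
      have e0 := hdm' I
      have e2 := hdm' I2
      rw [hset, Finset.sum_insert hnotmem, ← e2] at e0
      have hmono := mval_mono2 k pts M φ hapb hpblt.le hab
      have : (mval k pts M φ I2 : ℤ) ≤ (mval k pts M φ I : ℤ) := by
        exact_mod_cast hmono
      omega
    · -- both minimal: a' = b', filter = {I}
      push_neg at hbmin
      have hminb : ∀ d, b' ≤ d := hbmin
      have heq : a' = b' := le_antisymm hab (hminb a')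
      subst heq
      set I : Ibar P := ⟨(a', a'), hab⟩ with hI
      have hset : univ.filter (fun J => J ≤ I) = {I} := by
        ext J
        simp only [mem_filter, mem_univ, true_and, mem_singleton]
        obtain ⟨⟨c, d⟩, hcd⟩ := J
        rw [hI]
        rw [Ibar_eq_mk]
        repeat rw [Ibar_le_mk]
        constructor
        · rintro ⟨hc, hd⟩
          exact ⟨le_antisymm hc (hmin c), le_antisymm hd (hminb d)⟩
        · rintro ⟨rfl, rfl⟩
          exact ⟨le_rfl, le_rfl⟩
      have e0 := hdm' I
      rw [hset, Finset.sum_singleton] at e0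
      have : (0 : ℤ) ≤ (mval k pts M φ I : ℤ) := Int.natCast_nonneg _
      omega
end
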